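/- Let α be a countable type equipped with a partial order ≤ such that for every a : α the set {b | b < a} of strict predecessors is finite. Then there exists a linear order ≤' on α extending ≤ (that is, a ≤ b implies a ≤' b) such that for every a : α the set {b | b <' a} of strict ≤'-predecessors is finite. -/

import Mathlib

/-- **Linear extension with finite pasts.**
A partial order with finite pasts on a countable type extends to a linear order that
still has finite pasts. -/
theorem exists_linear_extension_finite_past
    {α : Type*} [Countable α] [PartialOrder α]
    (hfin : ∀ a : α, {b : α | b < a}.Finite) :
    ∃ L : LinearOrder α,
      (∀ a b : α, a ≤ b → L.le a b) ∧
      (∀ a : α, {b : α | L.lt b a}.Finite) := by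
  classical
  obtain ⟨e, he⟩ := Countable.exists_injective_nat α
  obtain ⟨s, hs, hrs⟩ := extend_partialOrder ((· ≤ ·) : α → α → Prop)
  haveI := hs
  -- the "stage" of an element: max of e over its downward closure
  set mm : α → ℕ := fun a => (insert a (hfin a).toFinset).sup e with hmm
  have hle : ∀ a, e a ≤ mm a := fun a =>
    Finset.le_sup (Finset.mem_insert_self a _)
  have hmono : ∀ a b : α, a ≤ b → mm a ≤ mm b := by
    intro a b hab
    refine Finset.sup_le fun c hc => Finset.le_sup ?_
    rcases Finset.mem_insert.1 hc with h | h
    · subst h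
      rcases eq_or_lt_of_le hab with h | h
      · exact h ▸ Finset.mem_insert_self _ _
      · exact Finset.mem_insert_of_mem ((hfin b).mem_toFinset.2 h)
    · have hca : c < a := (hfin a).mem_toFinset.1 h
      exact Finset.mem_insert_of_mem ((hfin b).mem_toFinset.2 (hca.trans_le hab))
  have stot : ∀ a b : α, s a b ∨ s b a := fun a b => Std.Total.total a b
  have santi : ∀ a b : α, s a b → s b a → a = b := fun a b h1 h2 =>
    Std.Antisymm.antisymm _ _ h1 h2
  have strans : ∀ a b c : α, s a b → s b c → s a c := fun a b c h1 h2 =>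
    IsTrans.trans _ _ _ h1 h2
  have srefl : ∀ a : α, s a a := fun a => Std.Refl.refl a
  refine ⟨{
    le := fun a b => mm a < mm b ∨ (mm a = mm b ∧ s a b)
    lt := fun a b => (mm a < mm b ∨ (mm a = mm b ∧ s a b)) ∧
      ¬(mm b < mm a ∨ (mm b = mm a ∧ s b a))
    lt_iff_le_not_ge := fun a b => Iff.rfl
    le_refl := fun a => Or.inr ⟨rfl, srefl a⟩
    le_trans := by
      rintro a b c (h | ⟨h1, h2⟩) (h' | ⟨h1', h2'⟩)
      · exact Or.inl (h.trans h')
      · exact Or.inl (h1' ▸ h)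
      · exact Or.inl (h1 ▸ h')
      · exact Or.inr ⟨h1.trans h1', strans _ _ _ h2 h2'⟩
    le_antisymm := by
      rintro a b (h | ⟨h1, h2⟩) (h' | ⟨h1', h2'⟩)
      · exact absurd h' (not_lt.2 h.le)
      · exact absurd h (h1' ▸ lt_irrefl _)
      · exact absurd h' (h1 ▸ lt_irrefl _)
      · exact santi _ _ h2 h2'
    le_total := by
      intro a b
      rcases lt_trichotomy (mm a) (mm b) with h | h | h
      · exact Or.inl (Or.inl h)
      · rcases stot a b with hs' | hs'
        · exact Or.inl (Or.inr ⟨h, hs'⟩)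
        · exact Or.inr (Or.inr ⟨h.symm, hs'⟩)
      · exact Or.inr (Or.inl h)
    toDecidableLE := fun a b => Classical.propDecidable _ }, ?_, ?_⟩
  · intro a b hab
    rcases eq_or_lt_of_le (hmono a b hab) with h | h
    · exact Or.inr ⟨h, hrs a b hab⟩
    · exact Or.inl h
  · intro a
    have : {b : α | mm b < mm a ∨ (mm b = mm a ∧ s b a ∧
        ¬(mm a < mm b ∨ (mm a = mm b ∧ s a b)))} ⊆ e ⁻¹' (Set.Iic (mm a)) := by
      intro b hb
      rcases hb with h | ⟨h, _⟩
      · exact (hle b).trans h.le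
      · exact (hle b).trans h.le
    refine Set.Finite.subset ((Set.finite_Iic (mm a)).preimage he.injOn) ?_
    intro b hb
    apply this
    -- hb : L.lt b a, unfold lt
    obtain ⟨hle', hnle⟩ := hb
    rcases hle' with h | ⟨h1, h2⟩
    · exact Or.inl h
    · exact Or.inr ⟨h1, h2, hnle⟩
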